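/- For ω = 1, the generating function Y_1(z,x) = Σ_{Ω^1-trees t, |t|≥2} z^{|t|} x^{l(t)}/|t|! satisfies the ODE dY_1/dz = xz + x²z²/2 + Y_1·(1 + xz), Y_1(0,x)=0. -/

import Mathlib

/-!
Common definitions: plane (ordered) labeled binary trees, the flip relation
generating the "unordered" identification, ranked trees, Ω-trees, and counts.
-/

/-- Plane rooted binary trees whose internal nodes carry a label. -/
inductive PTree : Type where
  | leaf : PTree
  | node : ℕ → PTree → PTree → PTree
deriving DecidableEq

namespace PTree

/-- Size: the number of internal nodes. -/
def size : PTree → ℕ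
  | leaf => 0
  | node _ l r => l.size + r.size + 1

/-- Number of cherries: internal nodes whose two children are leaves. -/
def cherries : PTree → ℕ
  | leaf => 0
  | node _ leaf leaf => 1
  | node _ l r => l.cherries + r.cherries

/-- Multiset of labels of internal nodes. -/
def labels : PTree → Multiset ℕ
  | leaf => 0
  | node k l r => k ::ₘ (l.labels + r.labels)

/-- Labels increase away from the root: each internal node's label is smaller
than all labels in its subtrees. -/
def Incr : PTree → Prop
  | leaf => True
  | node k l r =>
      (∀ m ∈ l.labels, k < m) ∧ (∀ m ∈ r.labels, k < m) ∧ Incr l ∧ Incr r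

/-- A ranked tree of size `n`: labels increase from the root and the internal
labels are exactly `{1, …, n}` (each occurring once). -/
def IsRanked (n : ℕ) (t : PTree) : Prop :=
  t.Incr ∧ t.labels = (Finset.Icc 1 n).val

/-- The Ω-condition: at every internal node, the smaller of the two child
subtrees has at most `ω` internal nodes. -/
def OmegaOK (ω : ℕ) : PTree → Prop
  | leaf => True
  | node _ l r => min l.size r.size ≤ ω ∧ OmegaOK ω l ∧ OmegaOK ω r

/-- One-step flip: swap the two children of some internal node. -/
inductive Flip : PTree → PTree → Prop
  | swap (k : ℕ) (l r : PTree) : Flip (node k l r) (node k r l)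
  | congL {l l' : PTree} (k : ℕ) (r : PTree) : Flip l l' → Flip (node k l r) (node k l' r)
  | congR {r r' : PTree} (k : ℕ) (l : PTree) : Flip r r' → Flip (node k l r) (node k l r')

end PTree

/-- Setoid on trees satisfying `P`, identifying trees up to swapping children
(so that left/right order is immaterial). -/
def treeSetoid (P : PTree → Prop) : Setoid {t : PTree // P t} :=
  Relation.EqvGen.setoid (fun a b => PTree.Flip a.1 b.1)

/-- `|R_n|` : the number of ranked trees (histories) of size `n`. -/
noncomputable def rankedCount (n : ℕ) : ℕ :=
  Nat.card (Quotient (treeSetoid (PTree.IsRanked n)))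

/-- `e_{n,l}` : the number of ranked trees of size `n` with `l` cherries. -/
noncomputable def rankedCountC (n l : ℕ) : ℕ :=
  Nat.card (Quotient (treeSetoid (fun t => PTree.IsRanked n t ∧ t.cherries = l)))

/-- `|Ω^ω_n|` : the number of Ω^ω-trees of size `n`. -/
noncomputable def omegaCount (ω n : ℕ) : ℕ :=
  Nat.card (Quotient (treeSetoid (fun t => PTree.IsRanked n t ∧ PTree.OmegaOK ω t)))

/-- `|Ω^ω_{n,l}|` : the number of Ω^ω-trees of size `n` with `l` cherries. -/
noncomputable def omegaCountC (ω n l : ℕ) : ℕ :=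
  Nat.card (Quotient (treeSetoid
    (fun t => PTree.IsRanked n t ∧ PTree.OmegaOK ω t ∧ t.cherries = l)))

open PowerSeries Polynomial

/-- `Y_1(z,x) = ∑_{Ω¹-trees t, |t| ≥ 2} z^{|t|} x^{l(t)}/|t|!`. -/
noncomputable def Y1gf : PowerSeries (Polynomial ℚ) :=
  PowerSeries.mk fun n =>
    if 2 ≤ n then
      ∑ l ∈ Finset.range (n + 1),
        Polynomial.C ((omegaCountC 1 n l : ℚ) / (n.factorial : ℚ)) * Polynomial.X ^ l
    else 0

namespace PTree

theorem card_labels (t : PTree) : Multiset.card t.labels = t.size := by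
  induction t with
  | leaf => rfl
  | node k l r ihl ihr => simp [labels, size, ihl, ihr, add_comm]

theorem cherries_node (k : ℕ) (l r : PTree) (h : ¬(l = leaf ∧ r = leaf)) :
    cherries (node k l r) = cherries l + cherries r := by
  cases l <;> cases r <;> simp_all [cherries]

theorem cherries_pos {t : PTree} (h : t ≠ leaf) : 0 < cherries t := by
  induction t with
  | leaf => exact absurd rfl h
  | node k l r ihl ihr =>
    cases l with
    | leaf => cases r with
      | leaf => simp [cherries]
      | node k2 a b => rw [cherries_node] <;> simp_all
    | node k2 a b => rw [cherries_node] <;> simp_all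

theorem cherries_le_size (t : PTree) : cherries t ≤ size t := by
  induction t with
  | leaf => simp [cherries, size]
  | node k l r ihl ihr =>
    by_cases h : l = leaf ∧ r = leaf
    · obtain ⟨rfl, rfl⟩ := h; simp [cherries, size]
    · rw [cherries_node _ _ _ h]; simp [size]; omega

theorem cherries_swap (k : ℕ) (l r : PTree) :
    cherries (node k l r) = cherries (node k r l) := by
  cases l <;> cases r <;> simp [cherries] <;> omega

theorem Flip.labels_eq {a b : PTree} (h : Flip a b) : a.labels = b.labels := by
  induction h with
  | swap k l r => simp [labels, add_comm]
  | congL k r h ih => simp [labels, ih]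
  | congR k l h ih => simp [labels, ih]

theorem Flip.ne_leaf_left {a b : PTree} (h : Flip a b) : a ≠ leaf := by
  cases h <;> simp

theorem Flip.ne_leaf_right {a b : PTree} (h : Flip a b) : b ≠ leaf := by
  cases h <;> simp

theorem Flip.size_eq {a b : PTree} (h : Flip a b) : a.size = b.size := by
  induction h with
  | swap k l r => simp [size]; omega
  | congL k r h ih => simp [size, ih]
  | congR k l h ih => simp [size, ih]

theorem Flip.cherries_eq {a b : PTree} (h : Flip a b) : a.cherries = b.cherries := by
  induction h with
  | swap k l r => exact cherries_swap k l r
  | congL k r h ih =>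
    rw [cherries_node _ _ _ (by simp [h.ne_leaf_left]),
      cherries_node _ _ _ (by simp [h.ne_leaf_right]), ih]
  | congR k l h ih =>
    rw [cherries_node _ _ _ (by simp [h.ne_leaf_left]),
      cherries_node _ _ _ (by simp [h.ne_leaf_right]), ih]

theorem Flip.incr_iff {a b : PTree} (h : Flip a b) : Incr a ↔ Incr b := by
  induction h with
  | swap k l r => simp [Incr]; tauto
  | congL k r h ih => simp [Incr, ih, h.labels_eq]
  | congR k l h ih => simp [Incr, ih, h.labels_eq]

theorem Flip.omega_iff {a b : PTree} (h : Flip a b) (ω : ℕ) : OmegaOK ω a ↔ OmegaOK ω b := by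
  induction h with
  | swap k l r => simp [OmegaOK, min_comm]; tauto
  | congL k r h ih => simp [OmegaOK, ih, h.size_eq]
  | congR k l h ih => simp [OmegaOK, ih, h.size_eq]

end PTree
namespace PTree

/-- Relabel a tree by a function. -/
def pmap (f : ℕ → ℕ) : PTree → PTree
  | leaf => leaf
  | node k l r => node (f k) (pmap f l) (pmap f r)

@[simp] theorem pmap_leaf (f : ℕ → ℕ) : pmap f leaf = leaf := rfl
@[simp] theorem pmap_node (f : ℕ → ℕ) (k l r) :
    pmap f (node k l r) = node (f k) (pmap f l) (pmap f r) := rfl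

@[simp] theorem pmap_eq_leaf_iff {f : ℕ → ℕ} {t : PTree} : pmap f t = leaf ↔ t = leaf := by
  cases t <;> simp [pmap]

@[simp] theorem size_pmap (f : ℕ → ℕ) (t : PTree) : size (pmap f t) = size t := by
  induction t <;> simp_all [size]

@[simp] theorem labels_pmap (f : ℕ → ℕ) (t : PTree) :
    labels (pmap f t) = (labels t).map f := by
  induction t <;> simp_all [labels]

@[simp] theorem cherries_pmap (f : ℕ → ℕ) (t : PTree) : cherries (pmap f t) = cherries t := by
  induction t with
  | leaf => rfl
  | node k l r ihl ihr =>
    by_cases h : l = leaf ∧ r = leaf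
    · obtain ⟨rfl, rfl⟩ := h; simp [cherries]
    · rw [pmap_node, cherries_node _ _ _ h, cherries_node, ihl, ihr]
      simpa using h

theorem pmap_pmap (f g : ℕ → ℕ) (t : PTree) : pmap f (pmap g t) = pmap (f ∘ g) t := by
  induction t <;> simp_all [pmap]

theorem pmap_congr {f g : ℕ → ℕ} {t : PTree} (h : ∀ k ∈ t.labels, f k = g k) :
    pmap f t = pmap g t := by
  induction t with
  | leaf => rfl
  | node k l r ihl ihr =>
    rw [pmap_node, h k (by simp [labels]), ihl (fun m hm => h m (by simp [labels, hm])),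
      ihr (fun m hm => h m (by simp [labels, hm])), pmap_node]

theorem pmap_id' {f : ℕ → ℕ} {t : PTree} (h : ∀ k ∈ t.labels, f k = k) : pmap f t = t := by
  induction t with
  | leaf => rfl
  | node k l r ihl ihr =>
    rw [pmap_node, h k (by simp [labels]), ihl (fun m hm => h m (by simp [labels, hm])),
      ihr (fun m hm => h m (by simp [labels, hm]))]

theorem incr_pmap {f : ℕ → ℕ} {t : PTree}
    (hf : ∀ a ∈ t.labels, ∀ b ∈ t.labels, a < b → f a < f b) (ht : Incr t) :
    Incr (pmap f t) := by
  induction t with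
  | leaf => trivial
  | node k l r ihl ihr =>
    obtain ⟨h1, h2, h3, h4⟩ := ht
    refine ⟨?_, ?_, ?_, ?_⟩
    · intro m hm
      simp only [labels_pmap, Multiset.mem_map] at hm
      obtain ⟨a, ha, rfl⟩ := hm
      exact hf k (by simp [labels]) a (by simp [labels, ha]) (h1 a ha)
    · intro m hm
      simp only [labels_pmap, Multiset.mem_map] at hm
      obtain ⟨a, ha, rfl⟩ := hm
      exact hf k (by simp [labels]) a (by simp [labels, ha]) (h2 a ha)
    · exact ihl (fun a ha b hb => hf a (by simp [labels, ha]) b (by simp [labels, hb])) h3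
    · exact ihr (fun a ha b hb => hf a (by simp [labels, ha]) b (by simp [labels, hb])) h4

theorem omega_pmap {f : ℕ → ℕ} {t : PTree} {ω : ℕ} (ht : OmegaOK ω t) :
    OmegaOK ω (pmap f t) := by
  induction t with
  | leaf => trivial
  | node k l r ihl ihr =>
    obtain ⟨h1, h2, h3⟩ := ht
    exact ⟨by simpa using h1, ihl h2, ihr h3⟩

/-- Root label (0 for a leaf). -/
def rlabel : PTree → ℕ
  | leaf => 0
  | node k _ _ => k

@[simp] theorem rlabel_leaf : rlabel leaf = 0 := rfl
@[simp] theorem rlabel_node (k l r) : rlabel (node k l r) = k := rfl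

theorem rlabel_mem_labels {t : PTree} (h : t ≠ leaf) : t.rlabel ∈ t.labels := by
  cases t with
  | leaf => exact absurd rfl h
  | node k l r => simp [labels]

/-- Canonical (sorted) form: at each node the root label of the left child is
at most that of the right child. -/
def Canon : PTree → Prop
  | leaf => True
  | node _ l r => rlabel l ≤ rlabel r ∧ Canon l ∧ Canon r

theorem canon_pmap {f : ℕ → ℕ} {t : PTree}
    (hpos : ∀ a ∈ t.labels, 0 < a)
    (hf : ∀ a ∈ t.labels, ∀ b ∈ t.labels, a < b → f a < f b) (ht : Canon t) :
    Canon (pmap f t) := by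
  induction t with
  | leaf => trivial
  | node k l r ihl ihr =>
    obtain ⟨h1, h2, h3⟩ := ht
    refine ⟨?_, ?_, ?_⟩
    · cases l with
      | leaf => simp [rlabel]
      | node kl ll rl =>
        cases r with
        | leaf =>
          exfalso
          have : (0:ℕ) < kl := hpos kl (by simp [labels])
          simp [rlabel] at h1; omega
        | node kr lr rr =>
          simp only [pmap_node, rlabel_node]
          simp only [rlabel_node] at h1
          rcases lt_or_eq_of_le h1 with h | h
          · exact le_of_lt (hf kl (by simp [labels]) kr (by simp [labels]) h)
          · rw [h]
    · exact ihl (fun a ha => hpos a (by simp [labels, ha]))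
        (fun a ha b hb => hf a (by simp [labels, ha]) b (by simp [labels, hb])) h2
    · exact ihr (fun a ha => hpos a (by simp [labels, ha]))
        (fun a ha b hb => hf a (by simp [labels, ha]) b (by simp [labels, hb])) h3

end PTree
namespace PTree

/-- Normal form: sort children by root label. -/
def norm : PTree → PTree
  | leaf => leaf
  | node k l r =>
    if rlabel (norm l) ≤ rlabel (norm r) then node k (norm l) (norm r)
    else node k (norm r) (norm l)

@[simp] theorem norm_leaf : norm leaf = leaf := rfl

@[simp] theorem labels_norm (t : PTree) : labels (norm t) = labels t := by
  induction t with
  | leaf => rfl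
  | node k l r ihl ihr =>
    rw [norm]
    split <;> simp [labels, ihl, ihr, add_comm]

@[simp] theorem size_norm (t : PTree) : size (norm t) = size t := by
  induction t with
  | leaf => rfl
  | node k l r ihl ihr =>
    rw [norm]
    split <;> simp [size, ihl, ihr] <;> omega

@[simp] theorem norm_eq_leaf_iff {t : PTree} : norm t = leaf ↔ t = leaf := by
  cases t with
  | leaf => simp
  | node k l r => rw [norm]; split <;> simp

@[simp] theorem cherries_norm (t : PTree) : cherries (norm t) = cherries t := by
  induction t with
  | leaf => rfl
  | node k l r ihl ihr =>
    by_cases h : l = leaf ∧ r = leaf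
    · obtain ⟨rfl, rfl⟩ := h; rfl
    · rw [norm]
      have h1 : ¬(norm l = leaf ∧ norm r = leaf) := by simpa using h
      have h2 : ¬(norm r = leaf ∧ norm l = leaf) := by tauto
      split
      · rw [cherries_node _ _ _ h1, cherries_node _ _ _ h, ihl, ihr]
      · rw [cherries_node _ _ _ h2, cherries_node _ _ _ h, ihl, ihr, Nat.add_comm]

theorem incr_norm {t : PTree} (h : Incr t) : Incr (norm t) := by
  induction t with
  | leaf => trivial
  | node k l r ihl ihr =>
    obtain ⟨h1, h2, h3, h4⟩ := h
    rw [norm]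
    split
    · exact ⟨by simpa using h1, by simpa using h2, ihl h3, ihr h4⟩
    · exact ⟨by simpa using h2, by simpa using h1, ihr h4, ihl h3⟩

theorem omega_norm {ω : ℕ} {t : PTree} (h : OmegaOK ω t) : OmegaOK ω (norm t) := by
  induction t with
  | leaf => trivial
  | node k l r ihl ihr =>
    obtain ⟨h1, h2, h3⟩ := h
    rw [norm]
    split
    · exact ⟨by simpa using h1, ihl h2, ihr h3⟩
    · exact ⟨by simpa [min_comm] using h1, ihr h3, ihl h2⟩

theorem canon_norm (t : PTree) : Canon (norm t) := by
  induction t with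
  | leaf => trivial
  | node k l r ihl ihr =>
    rw [norm]
    split
    · exact ⟨by assumption, ihl, ihr⟩
    · exact ⟨le_of_not_ge (by assumption), ihr, ihl⟩

theorem norm_eq_self {t : PTree} (h : Canon t) : norm t = t := by
  induction t with
  | leaf => rfl
  | node k l r ihl ihr =>
    obtain ⟨h1, h2, h3⟩ := h
    rw [norm, ihl h2, ihr h3, if_pos h1]

theorem rlabel_eq_zero {t : PTree} (hpos : ∀ m ∈ t.labels, 0 < m) (h : rlabel t = 0) :
    t = leaf := by
  cases t with
  | leaf => rfl
  | node k l r =>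
    have := hpos k (by simp [labels])
    simp [rlabel] at h; omega

/-- Under distinct positive labels, ties in `norm`'s comparison force equality. -/
theorem norm_tie {l r : PTree}
    (hnd : (labels l + labels r).Nodup) (hpos : ∀ m ∈ labels l + labels r, 0 < m)
    (h : rlabel (norm l) = rlabel (norm r)) : norm l = norm r := by
  rcases eq_or_ne (norm l) leaf with hl | hl
  · rw [hl] at h ⊢
    refine (rlabel_eq_zero ?_ h.symm).symm
    intro m hm
    exact hpos m (by simp at hm ⊢; tauto)
  · rcases eq_or_ne (norm r) leaf with hr | hr
    · rw [hr] at h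
      exact absurd (rlabel_eq_zero (fun m hm => hpos m (by simp at hm ⊢; tauto)) h) hl
    · exfalso
      have h1 : rlabel (norm l) ∈ labels l := by
        rw [← labels_norm]; exact rlabel_mem_labels hl
      have h2 : rlabel (norm r) ∈ labels r := by
        rw [← labels_norm]; exact rlabel_mem_labels hr
      rw [h] at h1
      have := Multiset.nodup_add.mp hnd
      exact Multiset.disjoint_left.mp this.2.2 h1 h2

theorem flip_norm_eq {a b : PTree} (h : Flip a b)
    (hnd : (labels a).Nodup) (hpos : ∀ m ∈ labels a, 0 < m) : norm a = norm b := by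
  induction h with
  | swap k l r =>
    have hnd' : (labels l + labels r).Nodup := by
      simp only [labels, Multiset.nodup_cons] at hnd
      exact hnd.2
    have hpos' : ∀ m ∈ labels l + labels r, 0 < m := fun m hm =>
      hpos m (by simp [labels] at hm ⊢; tauto)
    by_cases h1 : rlabel (norm l) ≤ rlabel (norm r) <;>
      by_cases h2 : rlabel (norm r) ≤ rlabel (norm l)
    · have := norm_tie hnd' hpos' (le_antisymm h1 h2)
      rw [norm, norm, if_pos h1, if_pos h2, this]
    · rw [norm, norm, if_pos h1, if_neg h2]
    · rw [norm, norm, if_neg h1, if_pos h2]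
    · omega
  | congL k r hf ih =>
    rename_i l l'
    have hnl : norm l = norm l' := by
      apply ih
      · simp only [labels, Multiset.nodup_cons, Multiset.nodup_add] at hnd
        exact hnd.2.1
      · intro m hm; exact hpos m (by simp [labels] at hm ⊢; tauto)
    rw [norm, norm, hnl]
  | congR k l hf ih =>
    rename_i r r'
    have hnr : norm r = norm r' := by
      apply ih
      · simp only [labels, Multiset.nodup_cons, Multiset.nodup_add] at hnd
        exact hnd.2.2.1
      · intro m hm; exact hpos m (by simp [labels] at hm ⊢; tauto)
    rw [norm, norm, hnr]

/-- Congruence of `EqvGen Flip` in the left child. -/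
theorem eqv_congL {l l' : PTree} (k : ℕ) (r : PTree) (h : Relation.EqvGen Flip l l') :
    Relation.EqvGen Flip (node k l r) (node k l' r) := by
  induction h with
  | rel x y hxy => exact .rel _ _ (Flip.congL k r hxy)
  | refl x => exact .refl _
  | symm x y hxy ih => exact .symm _ _ ih
  | trans x y z h1 h2 ih1 ih2 => exact .trans _ _ _ ih1 ih2

theorem eqv_congR {r r' : PTree} (k : ℕ) (l : PTree) (h : Relation.EqvGen Flip r r') :
    Relation.EqvGen Flip (node k l r) (node k l r') := by
  induction h with
  | rel x y hxy => exact .rel _ _ (Flip.congR k l hxy)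
  | refl x => exact .refl _
  | symm x y hxy ih => exact .symm _ _ ih
  | trans x y z h1 h2 ih1 ih2 => exact .trans _ _ _ ih1 ih2

theorem eqv_norm (t : PTree) : Relation.EqvGen Flip t (norm t) := by
  induction t with
  | leaf => exact .refl _
  | node k l r ihl ihr =>
    have h1 : Relation.EqvGen Flip (node k l r) (node k (norm l) (norm r)) :=
      .trans _ _ _ (eqv_congL k r ihl) (eqv_congR k (norm l) ihr)
    rw [norm]
    split
    · exact h1
    · exact .trans _ _ _ h1 (.rel _ _ (Flip.swap k (norm l) (norm r)))

end PTree
namespace PTree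

theorem labels_nodup {n : ℕ} {t : PTree} (h : IsRanked n t) : t.labels.Nodup := by
  rw [h.2]; exact (Finset.Icc 1 n).nodup

theorem labels_pos {n : ℕ} {t : PTree} (h : IsRanked n t) : ∀ m ∈ t.labels, 0 < m := by
  rw [h.2]
  intro m hm
  rw [← Finset.mem_def] at hm
  have := Finset.mem_Icc.mp hm
  omega

theorem labels_le {n : ℕ} {t : PTree} (h : IsRanked n t) : ∀ m ∈ t.labels, m ≤ n := by
  rw [h.2]
  intro m hm
  rw [← Finset.mem_def] at hm
  have := Finset.mem_Icc.mp hm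
  omega

theorem size_of_isRanked {n : ℕ} {t : PTree} (h : IsRanked n t) : t.size = n := by
  rw [← card_labels, h.2]
  simp

end PTree

open PTree

/-- The predicate of the `omegaCountC 1 n l` counting problem. -/
def Pfull (n l : ℕ) (t : PTree) : Prop :=
  IsRanked n t ∧ OmegaOK 1 t ∧ t.cherries = l

theorem flip_Pfull_iff {n l : ℕ} {a b : PTree} (h : Flip a b) : Pfull n l a ↔ Pfull n l b := by
  unfold Pfull IsRanked
  rw [h.labels_eq, h.incr_iff, h.omega_iff, h.cherries_eq]

theorem eqvgen_Pfull_iff {n l : ℕ} {a b : PTree} (h : Relation.EqvGen Flip a b) :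
    Pfull n l a ↔ Pfull n l b := by
  induction h with
  | rel x y hxy => exact flip_Pfull_iff hxy
  | refl x => exact Iff.rfl
  | symm x y hxy ih => exact ih.symm
  | trans x y z h1 h2 ih1 ih2 => exact ih1.trans ih2

theorem eqv_subtype {n l : ℕ} {a b : PTree} (h : Relation.EqvGen Flip a b) :
    ∀ (ha : Pfull n l a) (hb : Pfull n l b),
      Relation.EqvGen (fun (a b : {t : PTree // Pfull n l t}) => Flip a.1 b.1) ⟨a, ha⟩ ⟨b, hb⟩ := by
  induction h with
  | rel x y hxy => intro ha hb; exact .rel _ _ hxy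
  | refl x => intro ha hb; exact .refl _
  | symm x y hxy ih => intro ha hb; exact .symm _ _ (ih hb ha)
  | trans x y z h1 h2 ih1 ih2 =>
    intro ha hb
    have hy : Pfull n l y := (eqvgen_Pfull_iff h1).mp ha
    exact .trans _ _ _ (ih1 ha hy) (ih2 hy hb)

/-- The set of canonical representatives. -/
def Cset (n l : ℕ) : Set PTree :=
  {t | IsRanked n t ∧ OmegaOK 1 t ∧ t.cherries = l ∧ Canon t}

noncomputable def ecount (n l : ℕ) : ℕ := (Cset n l).ncard

theorem mem_Cset {n l : ℕ} {t : PTree} :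
    t ∈ Cset n l ↔ IsRanked n t ∧ OmegaOK 1 t ∧ t.cherries = l ∧ Canon t := Iff.rfl

noncomputable def quotEquivCanon (n l : ℕ) :
    Quotient (treeSetoid (fun t => PTree.IsRanked n t ∧ PTree.OmegaOK 1 t ∧ t.cherries = l)) ≃
      (Cset n l) where
  toFun := Quotient.lift
    (fun a => (⟨norm a.1,
      ⟨⟨incr_norm a.2.1.1, by rw [labels_norm]; exact a.2.1.2⟩, omega_norm a.2.2.1,
        by rw [cherries_norm]; exact a.2.2.2, canon_norm a.1⟩⟩ : Cset n l))
    (by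
      intro a b hab
      have : Relation.EqvGen (fun (x y : {t : PTree // Pfull n l t}) => Flip x.1 y.1) a b := hab
      apply Subtype.ext
      simp only
      clear hab
      induction this with
      | rel x y hxy => exact flip_norm_eq hxy (labels_nodup x.2.1) (labels_pos x.2.1)
      | refl x => rfl
      | symm x y hxy ih => exact ih.symm
      | trans x y z h1 h2 ih1 ih2 => exact ih1.trans ih2)
  invFun := fun t => Quotient.mk _ ⟨t.1, t.2.1, t.2.2.1, t.2.2.2.1⟩
  left_inv := by
    apply Quotient.ind
    intro a
    simp only [Quotient.lift_mk]
    apply Quotient.sound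
    exact eqv_subtype (Relation.EqvGen.symm _ _ (eqv_norm a.1)) _ _
  right_inv := by
    rintro ⟨t, ht⟩
    apply Subtype.ext
    simp only [Quotient.lift_mk]
    exact norm_eq_self ht.2.2.2

theorem omegaCountC_eq_ecount (n l : ℕ) : omegaCountC 1 n l = ecount n l := by
  rw [omegaCountC, ecount, ← Nat.card_coe_set_eq]
  exact Nat.card_congr (quotEquivCanon n l)
namespace PTree

/-- All trees of size at most `m` with labels in `[1, N]`. -/
def allT (N : ℕ) : ℕ → Finset PTree
  | 0 => {leaf}
  | m+1 => {leaf} ∪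
      ((Finset.Icc 1 N) ×ˢ ((allT N m) ×ˢ (allT N m))).image
        (fun p => node p.1 p.2.1 p.2.2)

theorem size_eq_zero {t : PTree} (h : t.size = 0) : t = leaf := by
  cases t with
  | leaf => rfl
  | node k l r => simp [size] at h

theorem size_eq_one {t : PTree} (h : t.size = 1) : ∃ j, t = node j leaf leaf := by
  cases t with
  | leaf => simp [size] at h
  | node k l r =>
    simp only [size] at h
    have hl : l.size = 0 := by omega
    have hr : r.size = 0 := by omega
    exact ⟨k, by rw [size_eq_zero hl, size_eq_zero hr]⟩

theorem mem_allT {N m : ℕ} {t : PTree} (hs : t.size ≤ m)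
    (hl : ∀ k ∈ t.labels, k ∈ Finset.Icc 1 N) : t ∈ allT N m := by
  induction m generalizing t with
  | zero =>
    have := size_eq_zero (Nat.le_zero.mp hs)
    subst this
    simp [allT]
  | succ m ih =>
    cases t with
    | leaf => simp [allT]
    | node k l r =>
      simp only [allT, Finset.mem_union, Finset.mem_image]
      right
      refine ⟨⟨k, l, r⟩, ?_, rfl⟩
      simp only [Finset.mem_product]
      refine ⟨hl k (by simp [labels]), ?_, ?_⟩
      · exact ih (by simp [size] at hs; omega) fun m hm => hl m (by simp [labels, hm])
      · exact ih (by simp [size] at hs; omega) fun m hm => hl m (by simp [labels, hm])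

end PTree

theorem Cset_finite (n l : ℕ) : (Cset n l).Finite := by
  apply Set.Finite.subset (PTree.allT n n).finite_toSet
  intro t ht
  obtain ⟨hrk, -, -, -⟩ := ht
  simp only [Finset.coe_insert, Set.mem_insert_iff, Finset.mem_coe]
  apply PTree.mem_allT (le_of_eq (PTree.size_of_isRanked hrk))
  intro k hk
  rw [hrk.2, Finset.mem_val] at hk
  exact hk

namespace PTree

theorem root_eq_one {n : ℕ} {k : ℕ} {l r : PTree} (h : IsRanked n (node k l r)) : k = 1 := by
  have hk1 : k ∈ labels (node k l r) := by simp [labels]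
  have hpos := labels_pos h k hk1
  have hn : 1 ≤ n := by
    have := labels_le h k hk1
    omega
  have h1 : (1 : ℕ) ∈ labels (node k l r) := by
    rw [h.2, Finset.mem_val, Finset.mem_Icc]
    omega
  by_contra hk
  simp only [labels, Multiset.mem_cons, Multiset.mem_add] at h1
  rcases h1 with h1 | h1 | h1
  · omega
  · have := h.1.1 1 h1; omega
  · have := h.1.2.1 1 h1; omega

theorem icc_cons {n : ℕ} (hn : 1 ≤ n) :
    (Finset.Icc 1 n).val = 1 ::ₘ (Finset.Icc 2 n).val := by
  have h : Finset.Icc 1 n = insert 1 (Finset.Icc 2 n) := by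
    ext x; simp only [Finset.mem_Icc, Finset.mem_insert]; omega
  rw [h, Finset.insert_val, Multiset.ndinsert_of_notMem]
  simp [Finset.mem_Icc]

theorem child_labels {n : ℕ} {k : ℕ} {X Y : PTree} (hn : 1 ≤ n)
    (h : IsRanked n (node k X Y)) : labels X + labels Y = (Finset.Icc 2 n).val := by
  have hk := root_eq_one h
  subst hk
  have h2 := h.2
  rw [icc_cons hn] at h2
  simp only [labels] at h2
  exact (Multiset.cons_inj_right 1).mp h2

theorem size_node_of_ranked {n : ℕ} {k : ℕ} {X Y : PTree}
    (h : IsRanked n (node k X Y)) : X.size + Y.size + 1 = n := by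
  have := size_of_isRanked h
  simpa [size] using this

/-- Decomposition of a canonical Ω¹ ranked tree of size `n + 2`, `n ≥ 2`. -/
theorem decomp {n l : ℕ} (hn : 2 ≤ n) {t : PTree} (ht : t ∈ Cset (n+2) l) :
    ∃ X Y : PTree, t = node 1 X Y ∧
      ((X = leaf ∧ Y.size = n + 1 ∧ Y ≠ leaf) ∨
       (∃ j, X = node j leaf leaf ∧ Y.size = n ∧ Y ≠ leaf ∧ j ≤ rlabel Y) ∨
       (∃ j, Y = node j leaf leaf ∧ X.size = n ∧ X ≠ leaf ∧ rlabel X ≤ j)) := by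
  obtain ⟨hrk, hom, hch, hcan⟩ := ht
  cases t with
  | leaf =>
    exfalso
    have := size_of_isRanked hrk
    simp [size] at this
  | node k X Y =>
    have hk := root_eq_one hrk
    subst hk
    refine ⟨X, Y, rfl, ?_⟩
    have hsz : X.size + Y.size + 1 = n + 2 := size_node_of_ranked hrk
    obtain ⟨hmin, homX, homY⟩ := hom
    obtain ⟨hc1, hc2, hc3⟩ := hcan
    by_cases hx : X.size ≤ 1
    · rcases Nat.le_one_iff_eq_zero_or_eq_one.mp hx with hx0 | hx1
      · left
        have hXl := size_eq_zero hx0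
        refine ⟨hXl, by omega, ?_⟩
        intro hYl
        rw [hYl] at hsz
        simp [size] at hsz
        omega
      · right; left
        obtain ⟨j, hj⟩ := size_eq_one hx1
        refine ⟨j, hj, by omega, ?_, ?_⟩
        · intro hYl; rw [hYl] at hsz; simp [size] at hsz; omega
        · rw [hj] at hc1; simpa using hc1
    · have hy : Y.size ≤ 1 := by
        rcases min_le_iff.mp hmin with h | h <;> omega
      rcases Nat.le_one_iff_eq_zero_or_eq_one.mp hy with hy0 | hy1
      · exfalso
        have hYl := size_eq_zero hy0
        rw [hYl] at hc1
        simp only [rlabel_leaf, Nat.le_zero] at hc1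
        have hXne : X ≠ leaf := by
          intro hXl; rw [hXl] at hsz; simp [size] at hsz; omega
        have := labels_pos hrk (rlabel X) (by
          simp only [labels, Multiset.mem_cons, Multiset.mem_add]
          right; left
          exact rlabel_mem_labels hXne)
        omega
      · right; right
        obtain ⟨j, hj⟩ := size_eq_one hy1
        refine ⟨j, hj, by omega, ?_, ?_⟩
        · intro hXl; rw [hXl] at hsz; simp [size] at hsz; omega
        · rw [hj] at hc1; simpa using hc1

end PTree
namespace PTree

def dnn (j k : ℕ) : ℕ := if k < j then k - 1 else k - 2
def upp (j k : ℕ) : ℕ := if k + 1 < j then k + 1 else k + 2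

theorem node_mem_core {n l : ℕ} {X Y : PTree} (hn : 1 ≤ n) (h : node 1 X Y ∈ Cset n l) :
    Incr X ∧ Incr Y ∧ Canon X ∧ Canon Y ∧ OmegaOK 1 X ∧ OmegaOK 1 Y ∧
      labels X + labels Y = (Finset.Icc 2 n).val ∧ rlabel X ≤ rlabel Y := by
  obtain ⟨hrk, hom, hch, hcan⟩ := h
  obtain ⟨-, -, hIX, hIY⟩ := hrk.1
  obtain ⟨-, hOX, hOY⟩ := hom
  obtain ⟨hc1, hcX, hcY⟩ := hcan
  exact ⟨hIX, hIY, hcX, hcY, hOX, hOY, child_labels hn hrk, hc1⟩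

theorem consIcc_facts {n j : ℕ} {s : Multiset ℕ} (h : j ::ₘ s = (Finset.Icc 2 (n+2)).val) :
    (2 ≤ j ∧ j ≤ n+2) ∧ j ∉ s ∧ s.Nodup ∧ (∀ m, m ∈ s ↔ 2 ≤ m ∧ m ≤ n+2 ∧ m ≠ j) := by
  have hnd : (j ::ₘ s).Nodup := by rw [h]; exact (Finset.Icc 2 (n+2)).nodup
  rw [Multiset.nodup_cons] at hnd
  have hj : j ∈ (Finset.Icc 2 (n+2)).val := by rw [← h]; simp
  rw [Finset.mem_val, Finset.mem_Icc] at hj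
  refine ⟨hj, hnd.1, hnd.2, fun m => ?_⟩
  constructor
  · intro hm
    have hm2 : m ∈ (Finset.Icc 2 (n+2)).val := by
      rw [← h]; exact Multiset.mem_cons_of_mem hm
    rw [Finset.mem_val, Finset.mem_Icc] at hm2
    exact ⟨hm2.1, hm2.2, fun hmj => hnd.1 (hmj ▸ hm)⟩
  · rintro ⟨h1, h2, h3⟩
    have : m ∈ j ::ₘ s := by
      rw [h, Finset.mem_val, Finset.mem_Icc]; omega
    rcases Multiset.mem_cons.mp this with rfl | hm
    · exact absurd rfl h3
    · exact hm

theorem fwdA {n l : ℕ} {Y : PTree} (hI : Incr Y) (hC : Canon Y) (hO : OmegaOK 1 Y)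
    (hch : cherries Y = l) (hlab : labels Y = (Finset.Icc 2 (n+2)).val) :
    pmap (· - 1) Y ∈ Cset (n+1) l := by
  have hmem : ∀ m ∈ labels Y, 2 ≤ m ∧ m ≤ n+2 := by
    rw [hlab]; intro m hm; rw [Finset.mem_val, Finset.mem_Icc] at hm; exact hm
  have hmono : ∀ a ∈ labels Y, ∀ b ∈ labels Y, a < b → a - 1 < b - 1 := by
    intro a ha b hb hab
    have h1 := hmem a ha; have h2 := hmem b hb; omega
  refine ⟨⟨incr_pmap hmono hI, ?_⟩, omega_pmap hO, by simpa using hch,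
    canon_pmap (fun a ha => by have := hmem a ha; omega) hmono hC⟩
  rw [labels_pmap, hlab]
  refine (Multiset.Nodup.ext ?_ (Finset.Icc 1 (n+1)).nodup).mpr ?_
  · refine Multiset.Nodup.map_on ?_ (Finset.Icc 2 (n+2)).nodup
    intro a ha b hb hab
    rw [Finset.mem_val, Finset.mem_Icc] at ha hb
    omega
  · intro m
    simp only [Multiset.mem_map, Finset.mem_val, Finset.mem_Icc]
    constructor
    · rintro ⟨a, ha, rfl⟩; omega
    · intro hm; exact ⟨m+1, by omega, by omega⟩

theorem fwdB {n l j : ℕ} {Y : PTree} (hI : Incr Y) (hC : Canon Y)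
    (hO : OmegaOK 1 Y) (hch : cherries Y = l)
    (hlab : j ::ₘ labels Y = (Finset.Icc 2 (n+2)).val) :
    pmap (dnn j) Y ∈ Cset n l ∧ 2 ≤ j ∧ j ≤ n + 2 := by
  obtain ⟨hj, hjY, hYnd, hmem⟩ := consIcc_facts hlab
  have hmono : ∀ a ∈ labels Y, ∀ b ∈ labels Y, a < b → dnn j a < dnn j b := by
    intro a ha b hb hab
    have h1 := (hmem a).mp ha; have h2 := (hmem b).mp hb
    simp only [dnn]; split_ifs <;> omega
  refine ⟨⟨⟨incr_pmap hmono hI, ?_⟩, omega_pmap hO, by simpa using hch,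
    canon_pmap (fun a ha => by have := (hmem a).mp ha; omega) hmono hC⟩, hj.1, hj.2⟩
  rw [labels_pmap]
  refine (Multiset.Nodup.ext ?_ (Finset.Icc 1 n).nodup).mpr ?_
  · refine Multiset.Nodup.map_on ?_ hYnd
    intro a ha b hb hab
    rcases Nat.lt_trichotomy a b with h | h | h
    · exact absurd hab (Nat.ne_of_lt (hmono a ha b hb h))
    · exact h
    · exact absurd hab.symm (Nat.ne_of_lt (hmono b hb a ha h))
  · intro m
    simp only [Multiset.mem_map, Finset.mem_val, Finset.mem_Icc]
    constructor
    · rintro ⟨a, ha, rfl⟩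
      have := (hmem a).mp ha
      simp only [dnn]; split_ifs <;> omega
    · intro hm
      by_cases hcase : m + 1 < j
      · refine ⟨m+1, (hmem (m+1)).mpr ⟨by omega, by omega, by omega⟩, ?_⟩
        simp only [dnn]; split_ifs <;> omega
      · refine ⟨m+2, (hmem (m+2)).mpr ⟨by omega, by omega, by omega⟩, ?_⟩
        simp only [dnn]; split_ifs <;> omega

theorem bwdA {n l : ℕ} {B : PTree} (hB : B ∈ Cset (n+1) l) :
    node 1 leaf (pmap (· + 1) B) ∈ Cset (n+2) l := by
  obtain ⟨⟨hI, hlab⟩, hO, hch, hC⟩ := hB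
  have hBne : B ≠ leaf := by
    intro h
    have := size_of_isRanked (⟨hI, hlab⟩ : IsRanked (n+1) B)
    rw [h] at this; simp [size] at this
  have hmem : ∀ m ∈ labels B, 1 ≤ m ∧ m ≤ n+1 := by
    rw [hlab]; intro m hm; rw [Finset.mem_val, Finset.mem_Icc] at hm; exact hm
  have hmono : ∀ a ∈ labels B, ∀ b ∈ labels B, a < b → a + 1 < b + 1 := by
    intro a _ b _ hab; omega
  refine ⟨⟨⟨?_, ?_, trivial, incr_pmap hmono hI⟩, ?_⟩, ⟨?_, trivial, omega_pmap hO⟩,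
    ?_, ?_, trivial, canon_pmap (fun a ha => by have := hmem a ha; omega) hmono hC⟩
  · intro m hm; simp [labels] at hm
  · intro m hm
    simp only [labels_pmap, Multiset.mem_map] at hm
    obtain ⟨a, ha, rfl⟩ := hm
    have := hmem a ha; omega
  · show (1 : ℕ) ::ₘ (labels leaf + labels (pmap (· + 1) B)) = (Finset.Icc 1 (n+2)).val
    rw [icc_cons (by omega)]
    congr 1
    show (0 : Multiset ℕ) + (labels (pmap (· + 1) B)) = (Finset.Icc 2 (n+2)).val
    rw [zero_add, labels_pmap, hlab]
    refine (Multiset.Nodup.ext ?_ (Finset.Icc 2 (n+2)).nodup).mpr ?_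
    · refine Multiset.Nodup.map_on ?_ (Finset.Icc 1 (n+1)).nodup
      intro a _ b _ hab; omega
    · intro m
      simp only [Multiset.mem_map, Finset.mem_val, Finset.mem_Icc]
      constructor
      · rintro ⟨a, ha, rfl⟩; omega
      · intro hm; exact ⟨m-1, by omega, by omega⟩
  · show min (size leaf) (size (pmap (· + 1) B)) ≤ 1
    simp [size]
  · show cherries (node 1 leaf (pmap (· + 1) B)) = l
    rw [cherries_node _ _ _ (by simp [hBne])]
    show cherries leaf + cherries (pmap (· + 1) B) = l
    rw [cherries_pmap, hch]
    have : cherries leaf = 0 := rfl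
    omega
  · show rlabel leaf ≤ rlabel (pmap (· + 1) B)
    simp

theorem bwdB {n l j : ℕ} {B : PTree} (hn : 2 ≤ n) (hj1 : 2 ≤ j) (hj2 : j ≤ n+2)
    (hB : B ∈ Cset n l) :
    (if j ≤ rlabel (pmap (upp j) B) then node 1 (node j leaf leaf) (pmap (upp j) B)
     else node 1 (pmap (upp j) B) (node j leaf leaf)) ∈ Cset (n+2) (l+1) := by
  obtain ⟨⟨hI, hlab⟩, hO, hch, hC⟩ := hB
  have hBne : B ≠ leaf := by
    intro h
    have := size_of_isRanked (⟨hI, hlab⟩ : IsRanked n B)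
    rw [h] at this; simp [size] at this; omega
  have hZne : pmap (upp j) B ≠ leaf := by simpa using hBne
  have hmemB : ∀ m ∈ labels B, 1 ≤ m ∧ m ≤ n := by
    rw [hlab]; intro m hm; rw [Finset.mem_val, Finset.mem_Icc] at hm; exact hm
  have hmono : ∀ a ∈ labels B, ∀ b ∈ labels B, a < b → upp j a < upp j b := by
    intro a ha b hb hab
    simp only [upp]; split_ifs <;> omega
  have hmemZ : ∀ m, m ∈ labels (pmap (upp j) B) ↔ 2 ≤ m ∧ m ≤ n+2 ∧ m ≠ j := by
    intro m
    simp only [labels_pmap, Multiset.mem_map]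
    constructor
    · rintro ⟨a, ha, rfl⟩
      have := hmemB a ha
      simp only [upp]; split_ifs <;> omega
    · rintro ⟨h1, h2, h3⟩
      by_cases hcase : m < j
      · refine ⟨m-1, ?_, ?_⟩
        · rw [hlab, Finset.mem_val, Finset.mem_Icc]; omega
        · simp only [upp]; split_ifs <;> omega
      · refine ⟨m-2, ?_, ?_⟩
        · rw [hlab, Finset.mem_val, Finset.mem_Icc]; omega
        · simp only [upp]; split_ifs <;> omega
  have hlabfull : (1:ℕ) ::ₘ (j ::ₘ labels (pmap (upp j) B)) = (Finset.Icc 1 (n+2)).val := by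
    rw [icc_cons (by omega)]
    congr 1
    refine (Multiset.Nodup.ext ?_ (Finset.Icc 2 (n+2)).nodup).mpr ?_
    · rw [Multiset.nodup_cons]
      constructor
      · intro hjmem
        exact ((hmemZ j).mp hjmem).2.2 rfl
      · rw [labels_pmap]
        refine Multiset.Nodup.map_on ?_ (by rw [hlab]; exact (Finset.Icc 1 n).nodup)
        intro a ha b hb hab
        rcases Nat.lt_trichotomy a b with h | h | h
        · exact absurd hab (Nat.ne_of_lt (hmono a ha b hb h))
        · exact h
        · exact absurd hab.symm (Nat.ne_of_lt (hmono b hb a ha h))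
    · intro m
      rw [Multiset.mem_cons, hmemZ m, Finset.mem_val, Finset.mem_Icc]
      omega
  have hIZ : Incr (pmap (upp j) B) := incr_pmap hmono hI
  have hCZ : Canon (pmap (upp j) B) :=
    canon_pmap (fun a ha => by have := hmemB a ha; omega) hmono hC
  have hOZ : OmegaOK 1 (pmap (upp j) B) := omega_pmap hO
  have hchZ : cherries (pmap (upp j) B) = l := by simpa using hch
  have hszZ : size (pmap (upp j) B) = n := by
    rw [size_pmap]
    exact size_of_isRanked ⟨hI, hlab⟩
  have hIcherry : Incr (node j leaf leaf) := by
    refine ⟨?_, ?_, trivial, trivial⟩ <;> intro m hm <;> simp [labels] at hm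
  have hOcherry : OmegaOK 1 (node j leaf leaf) := by
    exact ⟨by simp [size], trivial, trivial⟩
  have hCcherry : Canon (node j leaf leaf) := ⟨le_refl _, trivial, trivial⟩
  split_ifs with hord
  · refine ⟨⟨⟨?_, ?_, hIcherry, hIZ⟩, ?_⟩, ⟨?_, hOcherry, hOZ⟩, ?_, hord, hCcherry, hCZ⟩
    · intro m hm; simp [labels] at hm; omega
    · intro m hm; have := (hmemZ m).mp hm; omega
    · show (1:ℕ) ::ₘ (labels (node j leaf leaf) + labels (pmap (upp j) B)) =
        (Finset.Icc 1 (n+2)).val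
      rw [← hlabfull]
      congr 1
    · show min (size (node j leaf leaf)) (size (pmap (upp j) B)) ≤ 1
      simp [size, hszZ]
    · show cherries (node 1 (node j leaf leaf) (pmap (upp j) B)) = l + 1
      rw [cherries_node _ _ _ (by simp [hZne])]
      have : cherries (node j leaf leaf) = 1 := rfl
      omega
  · refine ⟨⟨⟨?_, ?_, hIZ, hIcherry⟩, ?_⟩, ⟨?_, hOZ, hOcherry⟩, ?_, le_of_not_ge hord,
      hCZ, hCcherry⟩
    · intro m hm; have := (hmemZ m).mp hm; omega
    · intro m hm; simp [labels] at hm; omega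
    · show (1:ℕ) ::ₘ (labels (pmap (upp j) B) + labels (node j leaf leaf)) =
        (Finset.Icc 1 (n+2)).val
      rw [← hlabfull]
      congr 1
      show labels (pmap (upp j) B) + (j ::ₘ (0 + 0)) = j ::ₘ labels (pmap (upp j) B)
      rw [add_zero, Multiset.cons_zero, add_comm, Multiset.singleton_add]
    · show min (size (pmap (upp j) B)) (size (node j leaf leaf)) ≤ 1
      simp [size, hszZ]
    · show cherries (node 1 (pmap (upp j) B) (node j leaf leaf)) = l + 1
      rw [cherries_node _ _ _ (by simp [hZne])]
      have : cherries (node j leaf leaf) = 1 := rfl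
      omega

end PTree
namespace PTree

theorem dnn_upp (j k : ℕ) : dnn j (upp j k) = k := by
  simp only [dnn, upp]; split_ifs <;> omega

theorem upp_dnn {j k : ℕ} (h2 : 2 ≤ k) (hne : k ≠ j) : upp j (dnn j k) = k := by
  simp only [dnn, upp]; split_ifs <;> omega

/-- Forward direction of the root decomposition. -/
def fwd : PTree → PTree ⊕ (ℕ × PTree)
  | leaf => Sum.inl leaf
  | node _ a b =>
    if a = leaf then Sum.inl (pmap (· - 1) b)
    else if b = leaf then Sum.inl (pmap (· - 1) a)
    else if a.size ≤ b.size then Sum.inr (rlabel a, pmap (dnn (rlabel a)) b)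
    else Sum.inr (rlabel b, pmap (dnn (rlabel b)) a)

/-- Backward direction of the root decomposition. -/
def bwd : PTree ⊕ (ℕ × PTree) → PTree
  | Sum.inl B => node 1 leaf (pmap (· + 1) B)
  | Sum.inr (j, B) =>
    if j ≤ rlabel (pmap (upp j) B) then node 1 (node j leaf leaf) (pmap (upp j) B)
    else node 1 (pmap (upp j) B) (node j leaf leaf)

theorem labels_cherry_add (j : ℕ) (s : Multiset ℕ) :
    labels (node j leaf leaf) + s = j ::ₘ s := by
  show (j ::ₘ (0 + 0)) + s = j ::ₘ s
  rw [add_zero, Multiset.cons_add, zero_add]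

theorem fwd_eq_A (k : ℕ) (Y : PTree) : fwd (node k leaf Y) = Sum.inl (pmap (· - 1) Y) := by
  simp [fwd]

theorem fwd_eq_B1 {n : ℕ} (k j : ℕ) {Y : PTree} (hY : Y ≠ leaf) (hsz : Y.size = n)
    (hn : 1 ≤ n) :
    fwd (node k (node j leaf leaf) Y) = Sum.inr (j, pmap (dnn j) Y) := by
  simp only [fwd]
  rw [if_neg (by simp), if_neg hY, if_pos (by simp [size, hsz]; omega)]
  rfl

theorem fwd_eq_B2 {n : ℕ} (k j : ℕ) {X : PTree} (hX : X ≠ leaf) (hsz : X.size = n)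
    (hn : 2 ≤ n) :
    fwd (node k X (node j leaf leaf)) = Sum.inr (j, pmap (dnn j) X) := by
  simp only [fwd]
  rw [if_neg hX, if_neg (by simp), if_neg (by simp [size, hsz]; omega)]
  rfl

theorem cherries_A {l : ℕ} {Y : PTree} (hY : Y ≠ leaf)
    (h : cherries (node 1 leaf Y) = l) : cherries Y = l := by
  rw [cherries_node _ _ _ (by simp [hY])] at h
  have : cherries leaf = 0 := rfl
  omega

theorem cherries_B1 {l : ℕ} {j : ℕ} {Y : PTree}
    (h : cherries (node 1 (node j leaf leaf) Y) = l + 1) : cherries Y = l := by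
  rw [cherries_node _ _ _ (by simp)] at h
  have : cherries (node j leaf leaf) = 1 := rfl
  omega

theorem cherries_B2 {l : ℕ} {j : ℕ} {X : PTree} (hX : X ≠ leaf)
    (h : cherries (node 1 X (node j leaf leaf)) = l + 1) : cherries X = l := by
  rw [cherries_node _ _ _ (by simp [hX])] at h
  have : cherries (node j leaf leaf) = 1 := rfl
  omega

end PTree

open PTree

theorem ecount_rec (n l : ℕ) (hn : 2 ≤ n) :
    ecount (n+2) (l+1) = ecount (n+1) (l+1) + (n+1) * ecount n l := by
  classical
  have h2 := Cset_finite (n+2) (l+1)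
  have hA := Cset_finite (n+1) (l+1)
  have hB := Cset_finite n l
  rw [ecount, ecount, ecount, Set.ncard_eq_toFinset_card _ h2,
    Set.ncard_eq_toFinset_card _ hA, Set.ncard_eq_toFinset_card _ hB]
  have hcard : (hA.toFinset.disjSum ((Finset.Icc 2 (n+2)) ×ˢ hB.toFinset)).card
      = hA.toFinset.card + (n+1) * hB.toFinset.card := by
    rw [Finset.card_disjSum, Finset.card_product, Nat.card_Icc]
    congr 1
  rw [← hcard]
  apply Finset.card_nbij' fwd bwd
  · -- fwd maps into the disjoint sum
    intro a ha
    rw [Finset.mem_coe, Set.Finite.mem_toFinset] at ha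
    obtain ⟨X, Y, rfl, hcase⟩ := decomp (by omega) ha
    obtain ⟨hIX, hIY, hCX, hCY, hOX, hOY, hlabs, hord⟩ := node_mem_core (by omega) ha
    rcases hcase with ⟨rfl, hszY, hYne⟩ | ⟨j, rfl, hszY, hYne, hjord⟩ |
      ⟨j, rfl, hszX, hXne, hjord⟩
    · rw [fwd_eq_A, Finset.mem_coe, Finset.inl_mem_disjSum, Set.Finite.mem_toFinset]
      rw [show labels (leaf : PTree) = (0 : Multiset ℕ) from rfl, zero_add] at hlabs
      exact fwdA hIY hCY hOY (cherries_A hYne ha.2.2.1) hlabs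
    · rw [fwd_eq_B1 1 j hYne hszY (by omega), Finset.mem_coe, Finset.inr_mem_disjSum, Finset.mem_product]
      rw [labels_cherry_add] at hlabs
      obtain ⟨hmem, hj1, hj2⟩ := fwdB hIY hCY hOY (cherries_B1 ha.2.2.1) hlabs
      exact ⟨by simp [Finset.mem_Icc]; omega, by rwa [Set.Finite.mem_toFinset]⟩
    · rw [fwd_eq_B2 1 j hXne hszX hn, Finset.mem_coe, Finset.inr_mem_disjSum, Finset.mem_product]
      rw [add_comm, labels_cherry_add] at hlabs
      obtain ⟨hmem, hj1, hj2⟩ := fwdB hIX hCX hOX (cherries_B2 hXne ha.2.2.1) hlabs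
      exact ⟨by simp [Finset.mem_Icc]; omega, by rwa [Set.Finite.mem_toFinset]⟩
  · -- bwd maps back
    rintro (B | ⟨j, B⟩) hb
    · rw [Finset.mem_coe, Finset.inl_mem_disjSum, Set.Finite.mem_toFinset] at hb
      rw [Finset.mem_coe, Set.Finite.mem_toFinset]
      exact bwdA hb
    · rw [Finset.mem_coe, Finset.inr_mem_disjSum, Finset.mem_product, Finset.mem_Icc,
        Set.Finite.mem_toFinset] at hb
      rw [Finset.mem_coe, Set.Finite.mem_toFinset]
      exact bwdB hn hb.1.1 hb.1.2 hb.2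
  · -- left inverse
    intro a ha
    rw [Finset.mem_coe, Set.Finite.mem_toFinset] at ha
    obtain ⟨X, Y, rfl, hcase⟩ := decomp (by omega) ha
    obtain ⟨hIX, hIY, hCX, hCY, hOX, hOY, hlabs, hord⟩ := node_mem_core (by omega) ha
    rcases hcase with ⟨rfl, hszY, hYne⟩ | ⟨j, rfl, hszY, hYne, hjord⟩ |
      ⟨j, rfl, hszX, hXne, hjord⟩
    · rw [fwd_eq_A]
      show node 1 leaf (pmap (· + 1) (pmap (· - 1) Y)) = node 1 leaf Y
      rw [show labels (leaf : PTree) = (0 : Multiset ℕ) from rfl, zero_add] at hlabs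
      rw [pmap_pmap, pmap_id']
      intro k hk
      rw [hlabs, Finset.mem_val, Finset.mem_Icc] at hk
      simp only [Function.comp_apply]
      omega
    · rw [fwd_eq_B1 1 j hYne hszY (by omega)]
      rw [labels_cherry_add] at hlabs
      obtain ⟨-, hjY, -, hmemY⟩ := consIcc_facts hlabs
      show bwd (Sum.inr (j, pmap (dnn j) Y)) = node 1 (node j leaf leaf) Y
      have hYid : pmap (upp j) (pmap (dnn j) Y) = Y := by
        rw [pmap_pmap, pmap_id']
        intro k hk
        have := (hmemY k).mp hk
        exact upp_dnn this.1 this.2.2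
      simp only [bwd, hYid]
      rw [if_pos]
      simpa using hjord
    · rw [fwd_eq_B2 1 j hXne hszX hn]
      rw [add_comm, labels_cherry_add] at hlabs
      obtain ⟨-, hjX, -, hmemX⟩ := consIcc_facts hlabs
      show bwd (Sum.inr (j, pmap (dnn j) X)) = node 1 X (node j leaf leaf)
      have hXid : pmap (upp j) (pmap (dnn j) X) = X := by
        rw [pmap_pmap, pmap_id']
        intro k hk
        have := (hmemX k).mp hk
        exact upp_dnn this.1 this.2.2
      simp only [bwd, hXid]
      rw [if_neg]
      have hX : rlabel X ∈ labels X := rlabel_mem_labels hXne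
      have : rlabel X ≠ j := fun h => hjX (h ▸ hX)
      omega
  · -- right inverse
    rintro (B | ⟨j, B⟩) hb
    · rw [Finset.mem_coe, Finset.inl_mem_disjSum, Set.Finite.mem_toFinset] at hb
      show fwd (node 1 leaf (pmap (· + 1) B)) = Sum.inl B
      rw [fwd_eq_A, pmap_pmap, pmap_id']
      intro k hk
      simp only [Function.comp_apply]
      omega
    · rw [Finset.mem_coe, Finset.inr_mem_disjSum, Finset.mem_product, Finset.mem_Icc,
        Set.Finite.mem_toFinset] at hb
      have hBne : B ≠ leaf := by
        intro h
        have := size_of_isRanked hb.2.1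
        rw [h] at this; simp [size] at this; omega
      have hZne : pmap (upp j) B ≠ leaf := by simpa using hBne
      have hszZ : (pmap (upp j) B).size = n := by
        rw [size_pmap]; exact size_of_isRanked hb.2.1
      have hid : pmap (dnn j) (pmap (upp j) B) = B := by
        rw [pmap_pmap, pmap_id']
        intro k hk
        exact dnn_upp j k
      show fwd (bwd (Sum.inr (j, B))) = Sum.inr (j, B)
      simp only [bwd]
      split_ifs with hord
      · rw [fwd_eq_B1 1 j hZne hszZ (by omega), hid]
      · rw [fwd_eq_B2 1 j hZne hszZ hn, hid]
namespace PTree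

theorem icc_cons_gen {a b : ℕ} (h : a ≤ b) :
    (Finset.Icc a b).val = a ::ₘ (Finset.Icc (a+1) b).val := by
  have he : Finset.Icc a b = insert a (Finset.Icc (a+1) b) := by
    ext x; simp only [Finset.mem_Icc, Finset.mem_insert]; omega
  rw [he, Finset.insert_val, Multiset.ndinsert_of_notMem]
  simp [Finset.mem_Icc]

theorem icc22 : (Finset.Icc 2 2).val = 2 ::ₘ 0 := by
  rw [icc_cons_gen (by omega), Finset.Icc_eq_empty (by omega)]; rfl

theorem icc12 : (Finset.Icc 1 2).val = 1 ::ₘ 2 ::ₘ 0 := by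
  rw [icc_cons_gen (by omega), icc22]

theorem icc33 : (Finset.Icc 3 3).val = 3 ::ₘ 0 := by
  rw [icc_cons_gen (by omega), Finset.Icc_eq_empty (by omega)]; rfl

theorem icc23 : (Finset.Icc 2 3).val = 2 ::ₘ 3 ::ₘ 0 := by
  rw [icc_cons_gen (by omega), icc33]

theorem icc13 : (Finset.Icc 1 3).val = 1 ::ₘ 2 ::ₘ 3 ::ₘ 0 := by
  rw [icc_cons_gen (by omega), icc23]

theorem mem_Cset2 {l : ℕ} {t : PTree} :
    t ∈ Cset 2 l ↔ l = 1 ∧ t = node 1 leaf (node 2 leaf leaf) := by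
  constructor
  · intro ht
    have hsz : t.size = 2 := size_of_isRanked ht.1
    cases t with
    | leaf => simp [size] at hsz
    | node k X Y =>
      have hk := root_eq_one ht.1; subst hk
      obtain ⟨hIX, hIY, hCX, hCY, hOX, hOY, hlabs, hord⟩ := node_mem_core (by omega) ht
      have hsizes : X.size + Y.size = 1 := by simp [size] at hsz; omega
      rcases Nat.eq_zero_or_pos X.size with hX0 | hXpos
      · have hXl := size_eq_zero hX0; subst hXl
        obtain ⟨j, hj⟩ := size_eq_one (show Y.size = 1 by omega); subst hj
        have hj2 : j = 2 := by
          have hjm : j ∈ labels (leaf : PTree) + labels (node j leaf leaf) := by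
            simp [labels]
          rw [hlabs, Finset.mem_val, Finset.mem_Icc] at hjm; omega
        subst hj2
        have hch := ht.2.2.1
        have hc : cherries (node 1 leaf (node 2 leaf leaf)) = 1 := rfl
        exact ⟨by omega, rfl⟩
      · exfalso
        have hYl := size_eq_zero (show Y.size = 0 by omega); subst hYl
        have hXne : X ≠ leaf := by
          intro h; rw [h] at hXpos; simp [size] at hXpos
        have hrm : rlabel X ∈ labels X + labels (leaf : PTree) := by
          simp only [labels]
          rw [Multiset.mem_add]
          exact Or.inl (rlabel_mem_labels hXne)
        rw [hlabs, Finset.mem_val, Finset.mem_Icc] at hrm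
        have h0 : rlabel (leaf : PTree) = 0 := rfl
        omega
  · rintro ⟨rfl, rfl⟩
    refine ⟨⟨?_, ?_⟩, ?_, rfl, ?_⟩
    · refine ⟨?_, ?_, trivial, ⟨?_, ?_, trivial, trivial⟩⟩ <;>
        (intro m hm; simp [labels] at hm) <;> omega
    · show (1 : ℕ) ::ₘ (labels (leaf : PTree) + labels (node 2 leaf leaf)) =
        (Finset.Icc 1 2).val
      rw [icc12]; rfl
    · exact ⟨by simp [size], trivial, by simp [size], trivial, trivial⟩
    · exact ⟨by simp, trivial, by simp, trivial, trivial⟩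

theorem mem_Cset3 {l : ℕ} {t : PTree} :
    t ∈ Cset 3 l ↔ (l = 1 ∧ t = node 1 leaf (node 2 leaf (node 3 leaf leaf))) ∨
      (l = 2 ∧ t = node 1 (node 2 leaf leaf) (node 3 leaf leaf)) := by
  constructor
  · intro ht
    have hsz : t.size = 3 := size_of_isRanked ht.1
    cases t with
    | leaf => simp [size] at hsz
    | node k X Y =>
      have hk := root_eq_one ht.1; subst hk
      obtain ⟨hIX, hIY, hCX, hCY, hOX, hOY, hlabs, hord⟩ := node_mem_core (by omega) ht
      have hsizes : X.size + Y.size = 2 := by simp [size] at hsz; omega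
      have hYne0 : Y.size = 0 → False := by
        intro hY0
        have hYl := size_eq_zero hY0
        subst hYl
        have hXne : X ≠ leaf := by
          intro h; rw [h] at hsizes; simp [size] at hsizes
        have hrm : rlabel X ∈ labels X + labels (leaf : PTree) := by
          simp only [labels]
          rw [Multiset.mem_add]
          exact Or.inl (rlabel_mem_labels hXne)
        rw [hlabs, Finset.mem_val, Finset.mem_Icc] at hrm
        have h0 : rlabel (leaf : PTree) = 0 := rfl
        omega
      rcases Nat.eq_zero_or_pos X.size with hX0 | hXpos
      · -- X = leaf, Y.size = 2
        have hXl := size_eq_zero hX0; subst hXl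
        have hY2 : Y.size = 2 := by omega
        have hlY : labels Y = 2 ::ₘ 3 ::ₘ 0 := by
          have h' := hlabs
          rw [icc23] at h'
          rw [show labels (leaf : PTree) = 0 from rfl, zero_add] at h'
          exact h'
        cases Y with
        | leaf => simp [size] at hY2
        | node m Z W =>
          obtain ⟨hm1, hm2, hIZ, hIW⟩ := hIY
          obtain ⟨hcZW, hCZ, hCW⟩ := hCY
          have hm : m = 2 := by
            by_contra hm3
            have hmmem : m ∈ labels (node m Z W) := by simp [labels]
            rw [hlY] at hmmem
            simp at hmmem
            have h2mem : (2:ℕ) ∈ labels (node m Z W) := by rw [hlY]; simp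
            simp only [labels, Multiset.mem_cons, Multiset.mem_add] at h2mem
            rcases h2mem with h | h | h
            · omega
            · have := hm1 2 h; omega
            · have := hm2 2 h; omega
          subst hm
          have hZW : labels Z + labels W = 3 ::ₘ 0 := by
            have : (2:ℕ) ::ₘ (labels Z + labels W) = 2 ::ₘ 3 ::ₘ 0 := by
              simpa [labels] using hlY
            exact (Multiset.cons_inj_right 2).mp this
          have hsZW : Z.size + W.size = 1 := by simp [size] at hY2; omega
          rcases Nat.eq_zero_or_pos Z.size with hZ0 | hZpos
          · have hZl := size_eq_zero hZ0; subst hZl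
            obtain ⟨w, hw⟩ := size_eq_one (show W.size = 1 by omega); subst hw
            have hw3 : w = 3 := by
              have hwm : w ∈ labels (leaf : PTree) + labels (node w leaf leaf) := by
                simp [labels]
              rw [hZW] at hwm; simp at hwm; omega
            subst hw3
            have hch := ht.2.2.1
            have hc : cherries (node 1 leaf (node 2 leaf (node 3 leaf leaf))) = 1 := rfl
            exact Or.inl ⟨by omega, rfl⟩
          · exfalso
            have hWl := size_eq_zero (show W.size = 0 by omega); subst hWl
            obtain ⟨z, hz⟩ := size_eq_one (show Z.size = 1 by omega); subst hz
            have hz3 : z = 3 := by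
              have hzm : z ∈ labels (node z leaf leaf) + labels (leaf : PTree) := by
                simp [labels]
              rw [hZW] at hzm; simp at hzm; omega
            subst hz3
            simp [rlabel] at hcZW
      · rcases Nat.eq_zero_or_pos Y.size with hY0 | hYpos
        · exact absurd hY0 (by intro h; exact hYne0 h)
        · -- both positive: sizes (1,1)
          obtain ⟨a, hA⟩ := size_eq_one (show X.size = 1 by omega); subst hA
          obtain ⟨b, hb⟩ := size_eq_one (show Y.size = 1 by omega); subst hb
          have hab : (a ::ₘ 0) + (b ::ₘ 0) = 2 ::ₘ 3 ::ₘ 0 := by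
            have := hlabs
            rw [icc23] at this
            simpa [labels] using this
          have hnd : ((a ::ₘ 0) + (b ::ₘ 0) : Multiset ℕ).Nodup := by
            rw [hab]
            rw [← icc23]
            exact (Finset.Icc 2 3).nodup
          have hane : a ≠ b := by
            simp [Multiset.nodup_cons] at hnd
            tauto
          have hamem : a ∈ ((2:ℕ) ::ₘ 3 ::ₘ 0 : Multiset ℕ) := by rw [← hab]; simp
          have hbmem : b ∈ ((2:ℕ) ::ₘ 3 ::ₘ 0 : Multiset ℕ) := by rw [← hab]; simp
          simp at hamem hbmem
          have hordab : a ≤ b := by simpa using hord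
          have ha2 : a = 2 := by omega
          have hb3 : b = 3 := by omega
          subst ha2; subst hb3
          have hch := ht.2.2.1
          have hc : cherries (node 1 (node 2 leaf leaf) (node 3 leaf leaf)) = 2 := rfl
          exact Or.inr ⟨by omega, rfl⟩
  · rintro (⟨rfl, rfl⟩ | ⟨rfl, rfl⟩)
    · refine ⟨⟨?_, ?_⟩, ?_, rfl, ?_⟩
      · refine ⟨?_, ?_, trivial, ⟨?_, ?_, trivial, ⟨?_, ?_, trivial, trivial⟩⟩⟩ <;>
          (intro m hm; simp [labels] at hm) <;> omega
      · show (1 : ℕ) ::ₘ (labels (leaf : PTree) +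
          labels (node 2 leaf (node 3 leaf leaf))) = (Finset.Icc 1 3).val
        rw [icc13]; rfl
      · exact ⟨by simp [size], trivial, by simp [size], trivial,
          by simp [size], trivial, trivial⟩
      · exact ⟨by simp, trivial, by simp, trivial, by simp, trivial, trivial⟩
    · refine ⟨⟨?_, ?_⟩, ?_, rfl, ?_⟩
      · refine ⟨?_, ?_, ⟨?_, ?_, trivial, trivial⟩, ⟨?_, ?_, trivial, trivial⟩⟩ <;>
          (intro m hm; simp [labels] at hm) <;> omega
      · show (1 : ℕ) ::ₘ (labels (node 2 leaf leaf) +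
          labels (node 3 leaf leaf)) = (Finset.Icc 1 3).val
        rw [icc13]; rfl
      · exact ⟨by simp [size], ⟨by simp [size], trivial, trivial⟩,
          ⟨by simp [size], trivial, trivial⟩⟩
      · exact ⟨by simp, ⟨by simp, trivial, trivial⟩, ⟨by simp, trivial, trivial⟩⟩
  
end PTree

open PTree

theorem ecount2 (l : ℕ) : ecount 2 l = if l = 1 then 1 else 0 := by
  split_ifs with h
  · subst h
    rw [ecount, show Cset 2 1 = {node 1 leaf (node 2 leaf leaf)} from
      Set.ext fun t => by rw [Set.mem_singleton_iff, mem_Cset2]; tauto]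
    exact Set.ncard_singleton _
  · rw [ecount, show Cset 2 l = ∅ from
      Set.eq_empty_iff_forall_notMem.mpr fun t ht => h (mem_Cset2.mp ht).1]
    exact Set.ncard_empty _

theorem ecount3 (l : ℕ) : ecount 3 l = if l = 1 ∨ l = 2 then 1 else 0 := by
  split_ifs with h
  · rcases h with rfl | rfl
    · rw [ecount, show Cset 3 1 = {node 1 leaf (node 2 leaf (node 3 leaf leaf))} from
        Set.ext fun t => by rw [Set.mem_singleton_iff, mem_Cset3]; simp]
      exact Set.ncard_singleton _
    · rw [ecount, show Cset 3 2 = {node 1 (node 2 leaf leaf) (node 3 leaf leaf)} from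
        Set.ext fun t => by rw [Set.mem_singleton_iff, mem_Cset3]; simp]
      exact Set.ncard_singleton _
  · rw [ecount, show Cset 3 l = ∅ from
      Set.eq_empty_iff_forall_notMem.mpr fun t ht => by
        rcases mem_Cset3.mp ht with ⟨rfl, -⟩ | ⟨rfl, -⟩ <;> simp at h]
    exact Set.ncard_empty _

theorem ecount_zero_cherries (n : ℕ) (hn : 1 ≤ n) : ecount n 0 = 0 := by
  rw [ecount, show Cset n 0 = ∅ from ?_]
  · exact Set.ncard_empty _
  · apply Set.eq_empty_iff_forall_notMem.mpr
    intro t ht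
    have hsz : t.size = n := size_of_isRanked ht.1
    have htne : t ≠ leaf := by
      intro h; rw [h] at hsz; simp [size] at hsz; omega
    have := cherries_pos htne
    have hch := ht.2.2.1
    omega
open PTree Polynomial PowerSeries

theorem ecount_gt {n l : ℕ} (h : n < l) : ecount n l = 0 := by
  rw [ecount, show Cset n l = ∅ from ?_]
  · exact Set.ncard_empty _
  · apply Set.eq_empty_iff_forall_notMem.mpr
    intro t ht
    have hsz : t.size = n := size_of_isRanked ht.1
    have hle := cherries_le_size t
    have hch := ht.2.2.1
    omega

/-- `S_k = ∑_l e_{k,l} x^l`. -/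
noncomputable def Spoly (k : ℕ) : Polynomial ℚ :=
  ∑ l ∈ Finset.range (k+1), Polynomial.C ((ecount k l : ℚ)) * Polynomial.X ^ l

theorem Spoly_rec (m : ℕ) :
    Spoly (m+4) = Spoly (m+3) + Polynomial.C ((m:ℚ)+3) * Polynomial.X * Spoly (m+2) := by
  have hL : Spoly (m+4) = ∑ l ∈ Finset.range (m+4),
      Polynomial.C ((ecount (m+4) (l+1) : ℚ)) * Polynomial.X ^ (l+1) := by
    unfold Spoly
    rw [Finset.sum_range_succ' _ (m+4), ecount_zero_cherries _ (by omega)]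
    simp
  have hR1 : Spoly (m+3) = ∑ l ∈ Finset.range (m+4),
      Polynomial.C ((ecount (m+3) (l+1) : ℚ)) * Polynomial.X ^ (l+1) := by
    unfold Spoly
    conv_rhs => rw [Finset.sum_range_succ]
    rw [ecount_gt (by omega), Finset.sum_range_succ' _ (m+3),
      ecount_zero_cherries _ (by omega)]
    simp
  have hR2 : Polynomial.C ((m:ℚ)+3) * Polynomial.X * Spoly (m+2) =
      ∑ l ∈ Finset.range (m+4),
        Polynomial.C (((m:ℚ)+3) * (ecount (m+2) l : ℚ)) * Polynomial.X ^ (l+1) := by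
    unfold Spoly
    conv_rhs => rw [Finset.sum_range_succ]
    rw [ecount_gt (by omega)]
    push_cast
    rw [mul_zero, map_zero, zero_mul, add_zero, Finset.mul_sum]
    refine Finset.sum_congr rfl fun l _ => ?_
    rw [map_mul]
    ring
  rw [hL, hR1, hR2, ← Finset.sum_add_distrib]
  refine Finset.sum_congr rfl fun l _ => ?_
  rw [← add_mul, ← map_add]
  congr 2
  have h := ecount_rec (m+2) l (by omega)
  rw [show m+2+2 = m+4 from rfl, show m+2+1 = m+3 from rfl] at h
  rw [h]
  push_cast
  ring

theorem coeffY {k : ℕ} (hk : 2 ≤ k) :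
    (PowerSeries.coeff k) Y1gf =
      Polynomial.C (1/(k.factorial : ℚ)) * Spoly k := by
  unfold Y1gf
  rw [PowerSeries.coeff_mk, if_pos hk]
  unfold Spoly
  rw [Finset.mul_sum]
  refine Finset.sum_congr rfl fun l _ => ?_
  rw [omegaCountC_eq_ecount, ← mul_assoc, ← map_mul]
  congr 2
  ring

theorem coeffY_small {k : ℕ} (hk : k < 2) :
    (PowerSeries.coeff k) Y1gf = 0 := by
  unfold Y1gf
  rw [PowerSeries.coeff_mk, if_neg (by omega)]

theorem Spoly2 : Spoly 2 = Polynomial.X := by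
  unfold Spoly
  rw [Finset.sum_range_succ, Finset.sum_range_succ, Finset.sum_range_one]
  rw [ecount2, ecount2, ecount2]
  norm_num

theorem Spoly3 : Spoly 3 = Polynomial.X + Polynomial.X ^ 2 := by
  unfold Spoly
  rw [Finset.sum_range_succ, Finset.sum_range_succ, Finset.sum_range_succ,
    Finset.sum_range_one]
  rw [ecount3, ecount3, ecount3, ecount3]
  norm_num

/-- `dY_1/dz = xz + x²z²/2 + Y_1·(1 + xz)`, with `Y_1(0,x)=0`. -/
theorem Y1gf_ode :
    PowerSeries.constantCoeff (R := Polynomial ℚ) Y1gf = 0 ∧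
    Y1gf.derivativeFun =
      PowerSeries.C (R := Polynomial ℚ) Polynomial.X * PowerSeries.X +
        PowerSeries.C (R := Polynomial ℚ) (Polynomial.C (1 / 2 : ℚ) * Polynomial.X ^ 2) *
          PowerSeries.X ^ 2 +
        Y1gf * (1 + PowerSeries.C (R := Polynomial ℚ) Polynomial.X * PowerSeries.X) := by
  constructor
  · show PowerSeries.constantCoeff (R := Polynomial ℚ) Y1gf = 0
    unfold Y1gf
    rw [PowerSeries.constantCoeff_mk]
    norm_num
  · refine PowerSeries.ext fun n => ?_
    have hprod : Y1gf * (1 + PowerSeries.C (R := Polynomial ℚ) Polynomial.X * PowerSeries.X)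
        = Y1gf + PowerSeries.C (R := Polynomial ℚ) Polynomial.X * (PowerSeries.X * Y1gf) := by
      ring
    rw [show Y1gf.derivativeFun = PowerSeries.derivative (Polynomial ℚ) Y1gf from rfl,
      PowerSeries.coeff_derivative, hprod, map_add, map_add, map_add,
      PowerSeries.coeff_C_mul, PowerSeries.coeff_C_mul, PowerSeries.coeff_C_mul,
      PowerSeries.coeff_X, PowerSeries.coeff_X_pow]
    match n with
    | 0 =>
      rw [PowerSeries.coeff_zero_X_mul, coeffY_small (by omega), coeffY_small (by omega)]
      norm_num
    | 1 =>
      rw [PowerSeries.coeff_succ_X_mul, coeffY (by omega), Spoly2,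
        coeffY_small (by omega), coeffY_small (by omega)]
      norm_num [Nat.factorial]
      have hc : Polynomial.C (1/2 : ℚ) * 2 = 1 := by
        rw [show (2 : Polynomial ℚ) = Polynomial.C (2 : ℚ) from
          (map_ofNat (Polynomial.C : ℚ →+* Polynomial ℚ) 2).symm, ← map_mul]
        norm_num
      linear_combination Polynomial.X * hc
    | 2 =>
      rw [PowerSeries.coeff_succ_X_mul, coeffY (by omega), coeffY (by omega),
        coeffY_small (by omega), Spoly2, Spoly3]
      norm_num [Nat.factorial]
      have hc : Polynomial.C (1/6 : ℚ) * 3 = Polynomial.C (1/2 : ℚ) := by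
        rw [show (3 : Polynomial ℚ) = Polynomial.C (3 : ℚ) from
          (map_ofNat (Polynomial.C : ℚ →+* Polynomial ℚ) 3).symm, ← map_mul]
        norm_num
      linear_combination (Polynomial.X + Polynomial.X ^ 2) * hc
    | (m+3) =>
      rw [PowerSeries.coeff_succ_X_mul, coeffY (by omega), coeffY (by omega),
        coeffY (by omega), Spoly_rec m, if_neg (show ¬(m+3 = 1) by omega),
        if_neg (show ¬(m+3 = 2) by omega)]
      have hne3 : ((m+3).factorial : ℚ) ≠ 0 := Nat.cast_ne_zero.mpr (Nat.factorial_ne_zero _)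
      have hne2 : ((m+2).factorial : ℚ) ≠ 0 := Nat.cast_ne_zero.mpr (Nat.factorial_ne_zero _)
      have hfac4 : ((m+4).factorial : ℚ) = ((m:ℚ)+4) * ((m+3).factorial : ℚ) := by
        rw [show m+4 = (m+3)+1 from rfl, Nat.factorial_succ]
        push_cast; ring
      have hfac3 : ((m+3).factorial : ℚ) = ((m:ℚ)+3) * ((m+2).factorial : ℚ) := by
        rw [show m+3 = (m+2)+1 from rfl, Nat.factorial_succ]
        push_cast; ring
      have hm4 : ((m:ℚ)+4) ≠ 0 := by positivity
      have hm3 : ((m:ℚ)+3) ≠ 0 := by positivity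
      have c1 : (1/((m+4).factorial : ℚ)) * ((m+3+1 : ℕ) : ℚ) = 1/((m+3).factorial : ℚ) := by
        rw [hfac4, show ((m+3+1 : ℕ) : ℚ) = (m:ℚ)+4 by push_cast; ring]
        field_simp
      have c2 : (1/((m+4).factorial : ℚ)) * ((m+3+1 : ℕ) : ℚ) * ((m:ℚ)+3)
          = 1/((m+2).factorial : ℚ) := by
        rw [c1, hfac3]
        field_simp
      have hmul : ((m+3 : ℕ) : Polynomial ℚ) + 1 = Polynomial.C ((m+3+1 : ℕ) : ℚ) := by
        rw [Polynomial.C_eq_natCast]; push_cast; ring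
      rw [hmul]
      rw [show Polynomial.C (1/((m+3+1).factorial : ℚ)) *
            (Spoly (m+3) + Polynomial.C ((m:ℚ)+3) * Polynomial.X * Spoly (m+2)) *
            Polynomial.C ((m+3+1 : ℕ) : ℚ)
          = Polynomial.C ((1/((m+4).factorial : ℚ)) * ((m+3+1 : ℕ) : ℚ)) * Spoly (m+3) +
            Polynomial.C ((1/((m+4).factorial : ℚ)) * ((m+3+1 : ℕ) : ℚ) * ((m:ℚ)+3)) *
              (Polynomial.X * Spoly (m+2)) from by
        rw [show (m+4).factorial = (m+3+1).factorial from rfl, map_mul, map_mul, map_mul]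
        ring]
      rw [c2, c1]
      ring
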